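/- Suppose F is continuous and 0 < F(y) < 1 for all y ∈ (0,1). Let m ≥ 2 be an integer, x ∈ (0,1) and ε > 0. Write q_m(x) = 1 − x^m − (1−x)^m and B_m(σ²(F);x) = Σ_{k=0}^m F(k/m)(1 − F(k/m)) p_{m,k}(x). Then P( |B_m(Y_n;x) − F(x)| ≥ ε·B_m(σ²(F);x) + |B_m(F;x) − F(x)| ) ≤ 2 exp( −(n/q_m(x))·B_m(σ²(F);x)·τ(ε) ). -/

import Mathlib

open Set Finset MeasureTheory ProbabilityTheory

/-- Bernstein basis polynomial `p_{m,k}(x) = C(m,k) x^k (1-x)^{m-k}`. -/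
noncomputable def bern (m k : ℕ) (x : ℝ) : ℝ :=
  (m.choose k : ℝ) * x ^ k * (1 - x) ^ (m - k)

/-- The `m`-th Bernstein polynomial of `f`. -/
noncomputable def Bpoly (m : ℕ) (f : ℝ → ℝ) (x : ℝ) : ℝ :=
  ∑ k ∈ Finset.range (m + 1), f ((k : ℝ) / m) * bern m k x

/-- Empirical distribution function `Y_n(x) = (1/n) Σ_r 1{X_r ≤ x}`. -/
noncomputable def empY {Ω : Type*} (n : ℕ) (X : Fin n → Ω → ℝ) (x : ℝ) (ω : Ω) : ℝ :=
  (1 / n : ℝ) * ∑ r, (if X r ω ≤ x then (1 : ℝ) else 0)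

/-- Random Bernstein polynomial `B_m(Y_n;x)`, as a function of `x` for each `ω`. -/
noncomputable def BY {Ω : Type*} (m n : ℕ) (X : Fin n → Ω → ℝ) (ω : Ω) (x : ℝ) : ℝ :=
  ∑ k ∈ Finset.range (m + 1), empY n X ((k : ℝ) / m) ω * bern m k x

/-- `τ(ε) = (1+ε) log(1+ε) - ε`. -/
noncomputable def tau (ε : ℝ) : ℝ := (1 + ε) * Real.log (1 + ε) - ε

set_option maxHeartbeats 1000000

section Aux
open MeasureTheory ProbabilityTheory Filter

lemma exp_series (y : ℝ) : Real.exp y = ∑' n : ℕ, y ^ n / n.factorial := by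
  rw [Real.exp_eq_exp_ℝ, NormedSpace.exp_eq_tsum_div]

lemma exp_split (y : ℝ) :
    Real.exp y = 1 + y + ∑' n : ℕ, y ^ (n + 2) / (n + 2).factorial := by
  have h := Real.summable_pow_div_factorial y
  have h1 : Summable (fun n : ℕ => y ^ (n + 1) / (n + 1).factorial) :=
    (summable_nat_add_iff 1).mpr h
  rw [exp_series y, Summable.tsum_eq_zero_add h, Summable.tsum_eq_zero_add h1]
  simp [Nat.factorial]
  ring

lemma exp_quad_bound {s q w : ℝ} (hs : 0 ≤ s) (hq : 0 < q) (hw : |w| ≤ q) :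
    Real.exp (s * w) ≤ 1 + s * w + w ^ 2 * ((Real.exp (s * q) - 1 - s * q) / q ^ 2) := by
  rw [exp_split (s * w), exp_split (s * q)]
  have hterm : ∀ n : ℕ, (s * w) ^ (n + 2) / (n + 2).factorial ≤
      w ^ 2 / q ^ 2 * ((s * q) ^ (n + 2) / (n + 2).factorial) := by
    intro n
    rw [← mul_div_assoc]
    apply (div_le_div_iff_of_pos_right (by positivity : (0:ℝ) < ((n+2).factorial : ℝ))).mpr
    calc (s * w) ^ (n + 2) ≤ |(s * w) ^ (n + 2)| := le_abs_self _
      _ = s ^ (n + 2) * |w| ^ (n + 2) := by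
          rw [abs_pow, abs_mul, abs_of_nonneg hs, mul_pow]
      _ = s ^ (n + 2) * (|w| ^ n * |w| ^ 2) := by ring
      _ ≤ s ^ (n + 2) * (q ^ n * w ^ 2) := by
          rw [sq_abs]
          have hwn : |w| ^ n ≤ q ^ n := pow_le_pow_left₀ (abs_nonneg w) hw n
          exact mul_le_mul_of_nonneg_left
            (mul_le_mul_of_nonneg_right hwn (sq_nonneg w)) (pow_nonneg hs _)
      _ = w ^ 2 / q ^ 2 * (s * q) ^ (n + 2) := by
          field_simp
          ring
  have hsum1 : Summable (fun n : ℕ => (s * w) ^ (n + 2) / (n + 2).factorial) :=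
    (summable_nat_add_iff 2).mpr (Real.summable_pow_div_factorial (s * w))
  have hsum2 : Summable (fun n : ℕ => (s * q) ^ (n + 2) / (n + 2).factorial) :=
    (summable_nat_add_iff 2).mpr (Real.summable_pow_div_factorial (s * q))
  have key : ∑' n : ℕ, (s * w) ^ (n + 2) / (n + 2).factorial ≤
      w ^ 2 / q ^ 2 * ∑' n : ℕ, (s * q) ^ (n + 2) / (n + 2).factorial := by
    rw [← tsum_mul_left]
    exact Summable.tsum_le_tsum hterm hsum1 (hsum2.mul_left _)
  have heq : (1 : ℝ) + s * q + (∑' n : ℕ, (s * q) ^ (n + 2) / (n + 2).factorial)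
      - 1 - s * q = ∑' n : ℕ, (s * q) ^ (n + 2) / (n + 2).factorial := by ring
  rw [heq]
  have : w ^ 2 * ((∑' n : ℕ, (s * q) ^ (n + 2) / (n + 2).factorial) / q ^ 2)
      = w ^ 2 / q ^ 2 * ∑' n : ℕ, (s * q) ^ (n + 2) / (n + 2).factorial := by ring
  linarith [key]

lemma integrable_of_ae_bound {Ω : Type*} [MeasurableSpace Ω] {P : Measure Ω}
    [IsProbabilityMeasure P] {f : Ω → ℝ} (hf : Measurable f) {C : ℝ}
    (h : ∀ᵐ ω ∂P, |f ω| ≤ C) : Integrable f P :=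
  Integrable.mono' (integrable_const C) hf.aestronglyMeasurable
    (h.mono fun ω hω => by simpa using hω)

lemma mgf_bennett {Ω : Type*} [MeasurableSpace Ω] (P : Measure Ω)
    [IsProbabilityMeasure P] (W : Ω → ℝ) (hW : Measurable W) {q v t : ℝ}
    (hq : 0 < q) (ht : 0 ≤ t) (hbd : ∀ᵐ ω ∂P, |W ω| ≤ q)
    (hmean : ∫ ω, W ω ∂P = 0) (hvar : ∫ ω, (W ω) ^ 2 ∂P ≤ v) :
    mgf W P t ≤ Real.exp (v * ((Real.exp (t * q) - 1 - t * q) / q ^ 2)) := by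
  set g : ℝ := (Real.exp (t * q) - 1 - t * q) / q ^ 2 with hg
  have hg0 : 0 ≤ g := by
    have := Real.add_one_le_exp (t * q)
    exact div_nonneg (by linarith) (sq_nonneg q)
  have hWint : Integrable W P := integrable_of_ae_bound hW hbd
  have hW2int : Integrable (fun ω => (W ω) ^ 2) P := by
    refine integrable_of_ae_bound (C := q ^ 2) (hW.pow_const 2) (hbd.mono fun ω hω => ?_)
    calc |W ω ^ 2| = |W ω| ^ 2 := abs_pow _ _
      _ ≤ q ^ 2 := pow_le_pow_left₀ (abs_nonneg _) hω 2
  have hexpint : Integrable (fun ω => Real.exp (t * W ω)) P := by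
    refine integrable_of_ae_bound (C := Real.exp (t * q)) ((hW.const_mul t).exp) (hbd.mono fun ω hω => ?_)
    rw [abs_of_nonneg (Real.exp_nonneg _)]
    exact Real.exp_le_exp.mpr (by nlinarith [abs_le.mp hω])
  have hle : mgf W P t ≤ ∫ ω, (1 + t * W ω + (W ω) ^ 2 * g) ∂P := by
    refine integral_mono_ae hexpint ?_ ?_
    · have i1 : Integrable (fun ω => 1 + t * W ω) P := (integrable_const 1).add (hWint.const_mul t)
      exact i1.add (hW2int.mul_const g)
    · exact hbd.mono fun ω hω => exp_quad_bound ht hq hω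
  have hint_eq : ∫ ω, (1 + t * W ω + (W ω) ^ 2 * g) ∂P
      = 1 + t * (∫ ω, W ω ∂P) + (∫ ω, (W ω) ^ 2 ∂P) * g := by
    have i1 : Integrable (fun ω => 1 + t * W ω) P := (integrable_const 1).add (hWint.const_mul t)
    rw [integral_add i1 (hW2int.mul_const g),
      integral_add (integrable_const 1) (hWint.const_mul t), integral_const,
      integral_const_mul, integral_mul_const]
    simp
  calc mgf W P t ≤ 1 + t * (∫ ω, W ω ∂P) + (∫ ω, (W ω) ^ 2 ∂P) * g := by
        rw [← hint_eq]; exact hle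
    _ ≤ 1 + v * g := by
        rw [hmean]
        have := mul_le_mul_of_nonneg_right hvar hg0
        linarith
    _ ≤ Real.exp (v * g) := by linarith [Real.add_one_le_exp (v * g)]

lemma chernoff_bennett {Ω : Type*} [MeasurableSpace Ω] (P : Measure Ω)
    [IsProbabilityMeasure P] (n : ℕ) (Z : Fin n → Ω → ℝ)
    (hZmeas : ∀ r, Measurable (Z r))
    (hZindep : iIndepFun Z P)
    {q v t a : ℝ} (hq : 0 < q) (ht : 0 ≤ t)
    (hbd : ∀ r, ∀ᵐ ω ∂P, |Z r ω| ≤ q)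
    (hmean : ∀ r, ∫ ω, Z r ω ∂P = 0)
    (hvar : ∀ r, ∫ ω, (Z r ω) ^ 2 ∂P ≤ v) :
    P {ω | a ≤ ∑ r, Z r ω} ≤
      ENNReal.ofReal (Real.exp (-t * a +
        n * (v * ((Real.exp (t * q) - 1 - t * q) / q ^ 2)))) := by
  set g : ℝ := v * ((Real.exp (t * q) - 1 - t * q) / q ^ 2) with hg
  have hSbd : ∀ᵐ ω ∂P, |∑ r, Z r ω| ≤ n * q := by
    have := (MeasureTheory.ae_all_iff).mpr hbd
    filter_upwards [this] with ω hω
    calc |∑ r, Z r ω| ≤ ∑ r, |Z r ω| := Finset.abs_sum_le_sum_abs _ _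
      _ ≤ ∑ _r : Fin n, q := Finset.sum_le_sum fun r _ => hω r
      _ = n * q := by simp [mul_comm]
  have hSmeas : Measurable (fun ω => ∑ r, Z r ω) :=
    Finset.measurable_sum _ fun r _ => hZmeas r
  have hSint : Integrable (fun ω => Real.exp (t * ∑ r, Z r ω)) P := by
    refine integrable_of_ae_bound (C := Real.exp (t * (n * q)))
      ((hSmeas.const_mul t).exp) (hSbd.mono fun ω hω => ?_)
    rw [abs_of_nonneg (Real.exp_nonneg _)]
    exact Real.exp_le_exp.mpr (mul_le_mul_of_nonneg_left (abs_le.mp hω).2 ht)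
  have hcher := measure_ge_le_exp_mul_mgf (μ := P) (X := fun ω => ∑ r, Z r ω)
    a ht hSint
  have hmgf_eq : mgf (fun ω => ∑ r, Z r ω) P t = ∏ r, mgf (Z r) P t := by
    have h := hZindep.mgf_sum (t := t) hZmeas Finset.univ
    have hfun : (fun ω => ∑ r, Z r ω) = ∑ i : Fin n, Z i := by
      funext ω; simp
    rw [hfun]; exact h
  have hmgf_le : mgf (fun ω => ∑ r, Z r ω) P t ≤ Real.exp (n * g) := by
    rw [hmgf_eq]
    calc ∏ r, mgf (Z r) P t ≤ ∏ _r : Fin n, Real.exp g :=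
          Finset.prod_le_prod (fun r _ => mgf_nonneg)
            (fun r _ => mgf_bennett P (Z r) (hZmeas r) hq ht (hbd r) (hmean r) (hvar r))
      _ = Real.exp (n * g) := by
          rw [Finset.prod_const, ← Real.exp_nat_mul]
          simp
  have : (P {ω | a ≤ ∑ r, Z r ω}).toReal ≤ Real.exp (-t * a + n * g) := by
    calc (P {ω | a ≤ ∑ r, Z r ω}).toReal ≤ Real.exp (-t * a) * mgf (fun ω => ∑ r, Z r ω) P t := hcher
      _ ≤ Real.exp (-t * a) * Real.exp (n * g) :=
          mul_le_mul_of_nonneg_left hmgf_le (Real.exp_nonneg _)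
      _ = Real.exp (-t * a + n * g) := (Real.exp_add _ _).symm
  calc P {ω | a ≤ ∑ r, Z r ω} = ENNReal.ofReal (P {ω | a ≤ ∑ r, Z r ω}).toReal :=
        (ENNReal.ofReal_toReal (measure_ne_top _ _)).symm
    _ ≤ ENNReal.ofReal (Real.exp (-t * a + n * g)) := ENNReal.ofReal_le_ofReal this

lemma bern_nonneg {m k : ℕ} {x : ℝ} (h0 : 0 ≤ x) (h1 : x ≤ 1) : 0 ≤ bern m k x := by
  unfold bern
  have : (0:ℝ) ≤ 1 - x := by linarith
  positivity

lemma bern_sum (m : ℕ) (x : ℝ) : ∑ k ∈ range (m + 1), bern m k x = 1 := by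
  have h := add_pow x (1 - x) m
  simp only [add_sub_cancel, one_pow] at h
  rw [h]
  apply Finset.sum_congr rfl
  intro k _
  unfold bern
  ring

lemma bern_zero (m : ℕ) (x : ℝ) : bern m 0 x = (1 - x) ^ m := by simp [bern]

lemma bern_m (m : ℕ) (x : ℝ) : bern m m x = x ^ m := by simp [bern]

lemma bern_dsum (m : ℕ) (hm : 1 ≤ m) (x : ℝ) :
    ∑ k ∈ range (m + 1), (if k = 0 ∨ k = m then (0:ℝ) else 1) * bern m k x
      = 1 - x ^ m - (1 - x) ^ m := by
  have key : ∀ k ∈ range (m + 1),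
      (if k = 0 ∨ k = m then (0:ℝ) else 1) * bern m k x
        = bern m k x - (if k = 0 then bern m k x else 0)
          - (if k = m then bern m k x else 0) := by
    intro k _
    by_cases h0 : k = 0
    · subst h0
      have : (0:ℕ) ≠ m := by omega
      simp [this]
    · by_cases hm' : k = m
      · subst hm'
        simp [h0]
      · simp [h0, hm']
  rw [Finset.sum_congr rfl key]
  rw [Finset.sum_sub_distrib, Finset.sum_sub_distrib, bern_sum,
    Finset.sum_ite_eq' (range (m+1)) 0 (fun k => bern m k x),
    Finset.sum_ite_eq' (range (m+1)) m (fun k => bern m k x)]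
  simp [Finset.mem_range, Nat.lt_succ_iff, bern_zero, bern_m]
  ring

lemma var_bound {Ω : Type*} [MeasurableSpace Ω] (P : Measure Ω) [IsProbabilityMeasure P]
    (m : ℕ) (hm : 1 ≤ m) (x : ℝ) (hx0 : 0 ≤ x) (hx1 : x ≤ 1)
    (G : ℕ → ℝ) (hG01 : ∀ k, 0 ≤ G k ∧ G k ≤ 1)
    (hGmono : ∀ j k, j ≤ k → G j ≤ G k)
    (hG0 : G 0 = 0) (hGm : G m = 1)
    (I : ℕ → Ω → ℝ) (hImeas : ∀ k, Measurable (I k))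
    (hI01 : ∀ k ω, I k ω = 0 ∨ I k ω = 1)
    (hImul : ∀ j k, j ≤ k → ∀ ω, I j ω * I k ω = I j ω)
    (hIint : ∀ k, ∫ ω, I k ω ∂P = G k) :
    ∫ ω, (∑ k ∈ range (m+1), (I k ω - G k) * bern m k x) ^ 2 ∂P
      ≤ (1 - x ^ m - (1 - x) ^ m) *
        ∑ k ∈ range (m+1), (G k * (1 - G k)) * bern m k x := by
  have hIabs : ∀ k ω, |I k ω - G k| ≤ 1 := by
    intro k ω
    rcases hI01 k ω with h | h <;> rw [h, abs_le] <;>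
      constructor <;> linarith [(hG01 k).1, (hG01 k).2]
  have hIint_b : ∀ k, Integrable (I k) P := by
    intro k
    refine integrable_of_ae_bound (hImeas k) (C := 1) (Filter.Eventually.of_forall fun ω => ?_)
    rcases hI01 k ω with h | h <;> rw [h] <;> norm_num
  have haint : ∀ j k, Integrable (fun ω => (I j ω - G j) * (I k ω - G k)) P := by
    intro j k
    refine integrable_of_ae_bound (((hImeas j).sub measurable_const).mul
      ((hImeas k).sub measurable_const)) (C := 1)
      (Filter.Eventually.of_forall fun ω => ?_)
    rw [abs_mul]
    calc |I j ω - G j| * |I k ω - G k| ≤ 1 * 1 :=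
      mul_le_mul (hIabs j ω) (hIabs k ω) (abs_nonneg _) zero_le_one
    _ = 1 := by norm_num
  have hcov : ∀ j k, j ≤ k →
      ∫ ω, (I j ω - G j) * (I k ω - G k) ∂P = G j - G j * G k := by
    intro j k hjk
    have heq : (fun ω => (I j ω - G j) * (I k ω - G k))
        = fun ω => (I j ω - G j * I k ω - G k * I j ω) + G j * G k := by
      funext ω
      have := hImul j k hjk ω
      nlinarith [this]
    rw [heq]
    have i1 : Integrable (fun ω => I j ω - G j * I k ω) P :=
      (hIint_b j).sub ((hIint_b k).const_mul (G j))
    have i2 : Integrable (fun ω => I j ω - G j * I k ω - G k * I j ω) P :=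
      i1.sub ((hIint_b j).const_mul (G k))
    rw [integral_add i2 (integrable_const _), integral_sub i1 ((hIint_b j).const_mul (G k)),
      integral_sub (hIint_b j) ((hIint_b k).const_mul (G j)),
      integral_const_mul, integral_const_mul, integral_const, hIint, hIint]
    simp
    ring
  have hpair : ∀ j ∈ range (m+1), ∀ k ∈ range (m+1),
      ∫ ω, (I j ω - G j) * (I k ω - G k) ∂P
        ≤ (if j = 0 ∨ j = m then (0:ℝ) else 1) * (G k * (1 - G k)) := by
    intro j hj k hk
    rw [Finset.mem_range, Nat.lt_succ_iff] at hj hk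
    rcases le_total j k with h | h
    · rw [hcov j k h]
      by_cases hj0 : j = 0
      · simp [hj0, hG0]
      by_cases hjm : j = m
      · have hkm : k = m := le_antisymm hk (hjm ▸ h)
        simp [hjm, hkm, hGm]
      · simp only [hj0, hjm, or_self, if_false, one_mul]
        have h1 := hGmono j k h
        nlinarith [(hG01 j).1, (hG01 k).2]
    · have hcomm : (fun ω => (I j ω - G j) * (I k ω - G k))
          = fun ω => (I k ω - G k) * (I j ω - G j) := funext fun ω => mul_comm _ _
      rw [hcomm, hcov k j h]
      by_cases hj0 : j = 0
      · have hk0 : k = 0 := by omega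
        simp [hj0, hk0, hG0]
      by_cases hjm : j = m
      · simp only [hj0, hjm, or_true, if_true, zero_mul]
        rw [hGm]
        simp
      · simp only [hj0, hjm, or_self, if_false, one_mul]
        have h1 := hGmono k j h
        nlinarith [(hG01 k).1, (hG01 j).2]
  -- expand the square
  have hsq : ∀ ω, (∑ k ∈ range (m+1), (I k ω - G k) * bern m k x) ^ 2
      = ∑ j ∈ range (m+1), ∑ k ∈ range (m+1),
          ((I j ω - G j) * (I k ω - G k)) * (bern m j x * bern m k x) := by
    intro ω
    rw [sq, Finset.sum_mul_sum]
    exact Finset.sum_congr rfl fun j _ => Finset.sum_congr rfl fun k _ => by ring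
  calc ∫ ω, (∑ k ∈ range (m+1), (I k ω - G k) * bern m k x) ^ 2 ∂P
      = ∑ j ∈ range (m+1), ∑ k ∈ range (m+1),
          (∫ ω, (I j ω - G j) * (I k ω - G k) ∂P) * (bern m j x * bern m k x) := by
        rw [show (fun ω => (∑ k ∈ range (m+1), (I k ω - G k) * bern m k x) ^ 2)
            = fun ω => ∑ j ∈ range (m+1), ∑ k ∈ range (m+1),
                ((I j ω - G j) * (I k ω - G k)) * (bern m j x * bern m k x)
          from funext hsq]
        rw [integral_finset_sum _ fun j _ => integrable_finset_sum _
          fun k _ => (haint j k).mul_const _]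
        exact Finset.sum_congr rfl fun j _ => by
          rw [integral_finset_sum _ fun k _ => (haint j k).mul_const _]
          exact Finset.sum_congr rfl fun k _ => integral_mul_const _ _
    _ ≤ ∑ j ∈ range (m+1), ∑ k ∈ range (m+1),
          ((if j = 0 ∨ j = m then (0:ℝ) else 1) * (G k * (1 - G k)))
            * (bern m j x * bern m k x) := by
        refine Finset.sum_le_sum fun j hj => Finset.sum_le_sum fun k hk => ?_
        exact mul_le_mul_of_nonneg_right (hpair j hj k hk)
          (mul_nonneg (bern_nonneg hx0 hx1) (bern_nonneg hx0 hx1))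
    _ = (1 - x ^ m - (1 - x) ^ m) *
        ∑ k ∈ range (m+1), (G k * (1 - G k)) * bern m k x := by
        rw [← bern_dsum m hm x, Finset.sum_mul_sum]
        exact Finset.sum_congr rfl fun j _ => Finset.sum_congr rfl fun k _ => by ring

noncomputable def Zfn (F : ℝ → ℝ) (m : ℕ) (x : ℝ) (u : ℝ) : ℝ :=
  ∑ k ∈ Finset.range (m + 1), ((if u ≤ (k : ℝ) / m then (1:ℝ) else 0) - F ((k : ℝ) / m))
    * bern m k x

lemma Zfn_measurable (F : ℝ → ℝ) (m : ℕ) (x : ℝ) : Measurable (Zfn F m x) := by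
  apply Finset.measurable_sum
  intro k _
  apply Measurable.mul_const
  apply Measurable.sub _ measurable_const
  exact Measurable.ite (measurableSet_le measurable_id measurable_const)
    measurable_const measurable_const

end Aux

theorem pointwise_concentration
    {Ω : Type*} [MeasurableSpace Ω] (P : Measure Ω) [IsProbabilityMeasure P]
    (n : ℕ) (hn : 2 ≤ n) (X : Fin n → Ω → ℝ)
    (hmeas : ∀ r, Measurable (X r))
    (hindep : iIndepFun X P)
    (hval : ∀ r ω, X r ω ∈ Set.Icc (0:ℝ) 1)
    (F : ℝ → ℝ) (hFcont : Continuous F)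
    (hcdf : ∀ r y, (P {ω | X r ω ≤ y}).toReal = F y)
    (hFpos : ∀ y ∈ Set.Ioo (0:ℝ) 1, 0 < F y ∧ F y < 1)
    (m : ℕ) (hm : 2 ≤ m)
    (x : ℝ) (hx : x ∈ Set.Ioo (0:ℝ) 1) (ε : ℝ) (hε : 0 < ε) :
    P {ω | |BY m n X ω x - F x| ≥
        ε * Bpoly m (fun y => F y * (1 - F y)) x + |Bpoly m F x - F x|} ≤
      ENNReal.ofReal (2 * Real.exp (-((n : ℝ) / (1 - x ^ m - (1 - x) ^ m)) *
        Bpoly m (fun y => F y * (1 - F y)) x * tau ε)) := by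
  obtain ⟨hx0, hx1⟩ := hx
  set σ := Bpoly m (fun y => F y * (1 - F y)) x with hσdef
  set q := 1 - x ^ m - (1 - x) ^ m with hqdef
  have r0 : Fin n := ⟨0, by omega⟩
  have hmR : (0:ℝ) < (m:ℝ) := by
    have h : 0 < m := by omega
    exact_mod_cast h
  have hnR : (0:ℝ) < (n:ℝ) := by
    have h : 0 < n := by omega
    exact_mod_cast h
  have hF01 : ∀ y, 0 ≤ F y ∧ F y ≤ 1 := by
    intro y
    rw [← hcdf r0 y]
    refine ⟨ENNReal.toReal_nonneg, ?_⟩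
    have h1 : P {ω | X r0 ω ≤ y} ≤ 1 := prob_le_one
    calc (P {ω | X r0 ω ≤ y}).toReal ≤ (1:ENNReal).toReal :=
          ENNReal.toReal_mono (by simp) h1
      _ = 1 := by simp
  have hFmono : ∀ a b : ℝ, a ≤ b → F a ≤ F b := by
    intro a b hab
    rw [← hcdf r0 a, ← hcdf r0 b]
    exact ENNReal.toReal_mono (measure_ne_top _ _)
      (measure_mono fun ω hω => le_trans hω hab)
  have hF1 : F 1 = 1 := by
    rw [← hcdf r0 1]
    have h : {ω | X r0 ω ≤ 1} = Set.univ := Set.eq_univ_of_forall fun ω => (hval r0 ω).2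
    rw [h]
    simp
  have hFneg : ∀ y : ℝ, y < 0 → F y = 0 := by
    intro y hy
    rw [← hcdf r0 y]
    have h : {ω | X r0 ω ≤ y} = ∅ := by
      ext ω
      simp only [Set.mem_setOf_eq, Set.mem_empty_iff_false, iff_false, not_le]
      linarith [(hval r0 ω).1]
    rw [h]
    simp
  have hF0 : F 0 = 0 := by
    have h1 : Filter.Tendsto F (nhdsWithin 0 (Set.Iio 0)) (nhds (F 0)) :=
      (hFcont.tendsto 0).mono_left nhdsWithin_le_nhds
    have h2 : Filter.Tendsto F (nhdsWithin 0 (Set.Iio 0)) (nhds 0) := by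
      apply Filter.Tendsto.congr' _ tendsto_const_nhds
      filter_upwards [self_mem_nhdsWithin] with y hy
      exact (hFneg y hy).symm
    exact tendsto_nhds_unique h1 h2
  have hq : 0 < q := by
    rw [hqdef]
    have h1 : x ^ m ≤ x ^ 2 := pow_le_pow_of_le_one hx0.le hx1.le hm
    have h2 : (1-x) ^ m ≤ (1-x) ^ 2 :=
      pow_le_pow_of_le_one (by linarith) (by linarith) hm
    nlinarith [mul_pos hx0 (by linarith : (0:ℝ) < 1 - x)]
  have hσ0 : 0 ≤ σ := by
    rw [hσdef]
    apply Finset.sum_nonneg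
    intro k _
    have h := hF01 ((k:ℝ)/m)
    exact mul_nonneg (mul_nonneg h.1 (by linarith [h.2])) (bern_nonneg hx0.le hx1.le)
  have hdiv : ∀ j k : ℕ, j ≤ k → (j:ℝ)/m ≤ (k:ℝ)/m := by
    intro j k hjk
    apply div_le_div_of_nonneg_right ?_ hmR.le
    exact_mod_cast hjk
  set Z : Fin n → Ω → ℝ := fun r ω => Zfn F m x (X r ω) with hZdef
  have hZmeas : ∀ r, Measurable (Z r) := fun r => (Zfn_measurable F m x).comp (hmeas r)
  have hZindep : iIndepFun Z P :=
    hindep.comp (fun _ => Zfn F m x) (fun _ => Zfn_measurable F m x)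
  have hIint : ∀ (r : Fin n) (c : ℝ),
      Integrable (fun ω => (if X r ω ≤ c then (1:ℝ) else 0)) P := by
    intro r c
    refine integrable_of_ae_bound (C := 1)
      (Measurable.ite (measurableSet_le (hmeas r) measurable_const)
        measurable_const measurable_const)
      (Filter.Eventually.of_forall fun ω => ?_)
    split <;> norm_num
  have hIval : ∀ (r : Fin n) (c : ℝ),
      ∫ ω, (if X r ω ≤ c then (1:ℝ) else 0) ∂P = F c := by
    intro r c
    have hs : MeasurableSet {ω | X r ω ≤ c} := measurableSet_le (hmeas r) measurable_const
    have heq : (fun ω => (if X r ω ≤ c then (1:ℝ) else 0))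
        = Set.indicator {ω | X r ω ≤ c} (fun _ => (1:ℝ)) := by
      funext ω
      rw [Set.indicator_apply]
      rfl
    rw [heq, integral_indicator_const (1:ℝ) hs, smul_eq_mul, mul_one, measureReal_def, hcdf]
  have hZmean : ∀ r, ∫ ω, Z r ω ∂P = 0 := by
    intro r
    rw [hZdef]
    simp only [Zfn]
    have hint : ∀ k ∈ Finset.range (m+1), Integrable
        (fun ω => ((if X r ω ≤ (k:ℝ)/m then (1:ℝ) else 0) - F ((k:ℝ)/m)) * bern m k x) P :=
      fun k _ => ((hIint r _).sub (integrable_const _)).mul_const _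
    rw [integral_finset_sum _ hint]
    apply Finset.sum_eq_zero
    intro k _
    rw [integral_mul_const, integral_sub (hIint r _) (integrable_const _), hIval r,
      integral_const]
    simp
  have hae : ∀ r : Fin n, ∀ᵐ ω ∂P, ¬ (X r ω ≤ 0) := by
    intro r
    rw [MeasureTheory.ae_iff]
    simp only [not_not]
    have h0 : (P {ω | X r ω ≤ 0}).toReal = 0 := by rw [hcdf r 0, hF0]
    exact ((ENNReal.toReal_eq_zero_iff _).mp h0).resolve_right (measure_ne_top _ _)
  have hZbd : ∀ r, ∀ᵐ ω ∂P, |Z r ω| ≤ q := by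
    intro r
    filter_upwards [hae r] with ω hω
    rw [hZdef]
    simp only [Zfn]
    calc |∑ k ∈ Finset.range (m+1),
            ((if X r ω ≤ (k:ℝ)/m then (1:ℝ) else 0) - F ((k:ℝ)/m)) * bern m k x|
        ≤ ∑ k ∈ Finset.range (m+1),
            |((if X r ω ≤ (k:ℝ)/m then (1:ℝ) else 0) - F ((k:ℝ)/m)) * bern m k x| :=
          Finset.abs_sum_le_sum_abs _ _
      _ ≤ ∑ k ∈ Finset.range (m+1), (if k = 0 ∨ k = m then (0:ℝ) else 1) * bern m k x := by
          apply Finset.sum_le_sum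
          intro k hk
          rw [abs_mul, abs_of_nonneg (bern_nonneg hx0.le hx1.le)]
          apply mul_le_mul_of_nonneg_right _ (bern_nonneg hx0.le hx1.le)
          by_cases hk0 : k = 0
          · subst hk0
            rw [if_pos (Or.inl rfl)]
            simp only [Nat.cast_zero, zero_div]
            rw [if_neg hω, hF0]
            simp
          · by_cases hkm : k = m
            · subst hkm
              rw [if_pos (Or.inr rfl)]
              rw [div_self (ne_of_gt hmR)]
              rw [if_pos (hval r ω).2, hF1]
              simp
            · rw [if_neg (show ¬(k = 0 ∨ k = m) from not_or.mpr ⟨hk0, hkm⟩)]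
              have h := hF01 ((k:ℝ)/m)
              split <;> rw [abs_le] <;> constructor <;> linarith [h.1, h.2]
      _ = q := by rw [bern_dsum m (by omega) x, hqdef]
  have hZvar : ∀ r, ∫ ω, (Z r ω)^2 ∂P ≤ q * σ := by
    intro r
    have hI01' : ∀ (k : ℕ) (ω : Ω), (if X r ω ≤ (k:ℝ)/m then (1:ℝ) else 0) = 0 ∨
        (if X r ω ≤ (k:ℝ)/m then (1:ℝ) else 0) = 1 := by
      intro k ω
      by_cases h : X r ω ≤ (k:ℝ)/m <;> simp [h]
    have hImul' : ∀ j k : ℕ, j ≤ k → ∀ ω,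
        (if X r ω ≤ (j:ℝ)/m then (1:ℝ) else 0) * (if X r ω ≤ (k:ℝ)/m then (1:ℝ) else 0)
          = (if X r ω ≤ (j:ℝ)/m then (1:ℝ) else 0) := by
      intro j k hjk ω
      by_cases h1 : X r ω ≤ (j:ℝ)/m
      · rw [if_pos h1, if_pos (le_trans h1 (hdiv j k hjk))]
        norm_num
      · rw [if_neg h1]
        ring
    have hvb := var_bound P m (by omega) x hx0.le hx1.le
      (fun k => F ((k:ℝ)/m))
      (fun k => hF01 _)
      (fun j k hjk => hFmono _ _ (hdiv j k hjk))
      (by simp only [Nat.cast_zero, zero_div]; exact hF0)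
      (by show F ((m:ℝ)/(m:ℝ)) = 1; rw [div_self (ne_of_gt hmR)]; exact hF1)
      (fun k ω => if X r ω ≤ (k:ℝ)/m then 1 else 0)
      (fun k => Measurable.ite (measurableSet_le (hmeas r) measurable_const)
        measurable_const measurable_const)
      hI01'
      hImul'
      (fun k => hIval r _)
    rw [hZdef]
    simp only [Zfn]
    rw [hqdef, hσdef]
    simp only [Bpoly]
    exact hvb
  set t : ℝ := Real.log (1 + ε) / q with htdef
  have hlog0 : 0 ≤ Real.log (1 + ε) := Real.log_nonneg (by linarith)
  have ht : 0 ≤ t := div_nonneg hlog0 hq.le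
  have htq : t * q = Real.log (1 + ε) := by
    rw [htdef]
    field_simp
  have hbound1 := chernoff_bennett P n Z hZmeas hZindep (a := n * (ε * σ)) (v := q * σ)
    hq ht hZbd hZmean hZvar
  have hZmeas' : ∀ r, Measurable (fun ω => -Z r ω) := fun r => (hZmeas r).neg
  have hZindep' : iIndepFun (fun r (ω : Ω) => -Z r ω) P :=
    hZindep.comp (fun _ => fun y => -y) (fun _ => measurable_neg)
  have hbound2 := chernoff_bennett P n (fun r ω => -Z r ω) hZmeas' hZindep'
    (a := n * (ε * σ)) (v := q * σ) hq ht
    (fun r => (hZbd r).mono fun ω h => by rwa [abs_neg])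
    (fun r => by rw [integral_neg, hZmean r, neg_zero])
    (fun r => by simp only [neg_sq]; exact hZvar r)
  have hexpval : -t * ((n:ℝ) * (ε * σ)) +
      (n:ℝ) * ((q * σ) * ((Real.exp (t * q) - 1 - t * q) / q ^ 2))
      = -((n:ℝ) / q) * σ * tau ε := by
    rw [htq, Real.exp_log (by linarith : (0:ℝ) < 1 + ε), htdef]
    simp only [tau]
    field_simp
    ring
  have hn0 : (n:ℝ) ≠ 0 := ne_of_gt hnR
  have hSid : ∀ ω, ∑ r, Z r ω = n * (BY m n X ω x - Bpoly m F x) := by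
    intro ω
    calc ∑ r, Z r ω
        = ∑ k ∈ Finset.range (m+1),
            ((∑ r, (if X r ω ≤ (k:ℝ)/m then (1:ℝ) else 0)) - n * F ((k:ℝ)/m))
              * bern m k x := by
          rw [hZdef]
          simp only [Zfn]
          rw [Finset.sum_comm]
          apply Finset.sum_congr rfl
          intro k _
          rw [← Finset.sum_mul, Finset.sum_sub_distrib, Finset.sum_const,
            Finset.card_univ, Fintype.card_fin, nsmul_eq_mul]
      _ = n * (BY m n X ω x - Bpoly m F x) := by
          simp only [BY, empY, Bpoly]
          rw [mul_sub, Finset.mul_sum, Finset.mul_sum, ← Finset.sum_sub_distrib]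
          apply Finset.sum_congr rfl
          intro k _
          simp only [← mul_assoc, mul_one_div_cancel hn0, one_mul]
          ring
  have hsub : {ω | |BY m n X ω x - F x| ≥ ε * σ + |Bpoly m F x - F x|}
      ⊆ {ω | (n:ℝ) * (ε * σ) ≤ ∑ r, Z r ω}
        ∪ {ω | (n:ℝ) * (ε * σ) ≤ ∑ r, -Z r ω} := by
    intro ω hω
    simp only [Set.mem_setOf_eq, ge_iff_le] at hω
    have hid := hSid ω
    have h1 : |BY m n X ω x - F x| - |Bpoly m F x - F x|
        ≤ |BY m n X ω x - Bpoly m F x| := by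
      have := abs_sub_abs_le_abs_sub (BY m n X ω x - F x) (Bpoly m F x - F x)
      have heq : BY m n X ω x - F x - (Bpoly m F x - F x)
          = BY m n X ω x - Bpoly m F x := by ring
      rwa [heq] at this
    have h2 : ε * σ ≤ |BY m n X ω x - Bpoly m F x| := by linarith
    have habs : (n:ℝ) * (ε * σ) ≤ |∑ r, Z r ω| := by
      rw [hid, abs_mul, abs_of_nonneg hnR.le]
      exact mul_le_mul_of_nonneg_left h2 hnR.le
    rcases le_abs.mp habs with h | h
    · exact Or.inl h
    · right
      simp only [Set.mem_setOf_eq]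
      rw [Finset.sum_neg_distrib]
      exact h
  calc P {ω | |BY m n X ω x - F x| ≥ ε * σ + |Bpoly m F x - F x|}
      ≤ P ({ω | (n:ℝ) * (ε * σ) ≤ ∑ r, Z r ω}
          ∪ {ω | (n:ℝ) * (ε * σ) ≤ ∑ r, -Z r ω}) := measure_mono hsub
    _ ≤ P {ω | (n:ℝ) * (ε * σ) ≤ ∑ r, Z r ω}
        + P {ω | (n:ℝ) * (ε * σ) ≤ ∑ r, -Z r ω} := measure_union_le _ _
    _ ≤ ENNReal.ofReal (Real.exp (-t * ((n:ℝ) * (ε * σ)) +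
          (n:ℝ) * ((q * σ) * ((Real.exp (t * q) - 1 - t * q) / q ^ 2))))
        + ENNReal.ofReal (Real.exp (-t * ((n:ℝ) * (ε * σ)) +
          (n:ℝ) * ((q * σ) * ((Real.exp (t * q) - 1 - t * q) / q ^ 2)))) :=
        add_le_add hbound1 hbound2
    _ = ENNReal.ofReal (2 * Real.exp (-((n:ℝ) / q) * σ * tau ε)) := by
        rw [← ENNReal.ofReal_add (Real.exp_nonneg _) (Real.exp_nonneg _)]
        rw [hexpval, ← two_mul]
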